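/- (Lemma 2, equality of optimal values) Fix G an M-by-M real matrix, R_n a K-by-K real positive definite matrix, R_v an M-by-M real positive definite matrix, R_θ a K-by-K real positive semi-definite matrix, and P₀ > 0. Let F be the set of M-by-K real matrices W with Tr(W (R_θ + R_n) Wᵀ) ≤ P₀. Then the infimum, over triples (W, γ, Γ) with W ∈ F, γ ∈ ℝ, Γ a symmetric K-by-K real matrix such that Tr(Γ) ≤ γ and the block matrix [[Γ, R_n⁻¹], [R_n⁻¹, Wᵀ Gᵀ R_v⁻¹ G W + R_n⁻¹]] is positive semi-definite, of the value γ, equals Tr(R_n⁻¹) minus the supremum over W ∈ F of Tr(Wᵀ Gᵀ (G W R_n Wᵀ Gᵀ + R_v)⁻¹ G W). -/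

import Mathlib

open Matrix

/-- trace of a real PSD matrix is nonnegative -/
lemma psd_trace_nonneg {n : ℕ} {A : Matrix (Fin n) (Fin n) ℝ} (hA : A.PosSemidef) :
    0 ≤ A.trace := by
  rw [Matrix.trace]
  refine Finset.sum_nonneg fun i _ => ?_
  exact hA.diag_nonneg

/-- generalized Woodbury-type identity -/
lemma wood {k m : ℕ}
    (X : Matrix (Fin k) (Fin m) ℝ) (Y : Matrix (Fin m) (Fin k) ℝ)
    (Rn : Matrix (Fin k) (Fin k) ℝ) (Rv : Matrix (Fin m) (Fin m) ℝ)
    (hRn : IsUnit Rn.det) (hRv : IsUnit Rv.det)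
    (hS : IsUnit (X * Rv⁻¹ * Y + Rn⁻¹).det)
    (hA : IsUnit (Y * Rn * X + Rv).det) :
    Rn⁻¹ - Rn⁻¹ * (X * Rv⁻¹ * Y + Rn⁻¹)⁻¹ * Rn⁻¹
      = X * (Y * Rn * X + Rv)⁻¹ * Y := by
  set S := X * Rv⁻¹ * Y + Rn⁻¹ with hSdef
  set A := Y * Rn * X + Rv with hAdef
  have key : S * (Rn * X) = X * Rv⁻¹ * A := by
    rw [hSdef, hAdef, Matrix.add_mul, Matrix.mul_add]
    congr 1
    · simp only [Matrix.mul_assoc]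
    · rw [Matrix.nonsing_inv_mul_cancel_left _ _ hRn, Matrix.mul_assoc,
        Matrix.nonsing_inv_mul _ hRv, Matrix.mul_one]
  have key2 : X * A⁻¹ = Rn⁻¹ * (S⁻¹ * (X * Rv⁻¹)) := by
    have h1 : S⁻¹ * (S * (Rn * X)) * A⁻¹ = S⁻¹ * (X * Rv⁻¹ * A) * A⁻¹ := by rw [key]
    rw [Matrix.nonsing_inv_mul_cancel_left _ _ hS, ← Matrix.mul_assoc S⁻¹ (X * Rv⁻¹) A,
      Matrix.mul_nonsing_inv_cancel_right _ _ hA] at h1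
    calc X * A⁻¹ = Rn⁻¹ * (Rn * (X * A⁻¹)) := by
          rw [Matrix.nonsing_inv_mul_cancel_left _ _ hRn]
      _ = Rn⁻¹ * (Rn * X * A⁻¹) := by rw [Matrix.mul_assoc]
      _ = Rn⁻¹ * (S⁻¹ * (X * Rv⁻¹)) := by rw [h1]
  have hXY : X * Rv⁻¹ * Y = S - Rn⁻¹ := by
    rw [hSdef]; exact (add_sub_cancel_right _ _).symm
  calc Rn⁻¹ - Rn⁻¹ * S⁻¹ * Rn⁻¹
      = Rn⁻¹ * (S⁻¹ * (S - Rn⁻¹)) := by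
        rw [Matrix.mul_sub S⁻¹, Matrix.nonsing_inv_mul _ hS, Matrix.mul_sub,
          Matrix.mul_one, Matrix.mul_assoc]
    _ = Rn⁻¹ * (S⁻¹ * (X * Rv⁻¹ * Y)) := by rw [hXY]
    _ = Rn⁻¹ * (S⁻¹ * (X * Rv⁻¹)) * Y := by simp [Matrix.mul_assoc]
    _ = X * A⁻¹ * Y := by rw [← key2]

section perW
variable {M K : ℕ}
    (G : Matrix (Fin M) (Fin M) ℝ)
    (Rn : Matrix (Fin K) (Fin K) ℝ)
    (Rv : Matrix (Fin M) (Fin M) ℝ)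
    (W : Matrix (Fin M) (Fin K) ℝ)

lemma S_posdef (hRn : Rn.PosDef) (hRv : Rv.PosDef) :
    (Wᵀ * Gᵀ * Rv⁻¹ * G * W + Rn⁻¹).PosDef := by
  have h1 := (hRv.inv.posSemidef).conjTranspose_mul_mul_same (G * W)
  have h1' : (Wᵀ * Gᵀ * Rv⁻¹ * G * W).PosSemidef := by
    simpa [Matrix.conjTranspose_eq_transpose_of_trivial, Matrix.transpose_mul,
      Matrix.mul_assoc] using h1
  exact Matrix.PosDef.posSemidef_add h1' hRn.inv

lemma A_posdef (hRn : Rn.PosDef) (hRv : Rv.PosDef) :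
    (G * W * Rn * Wᵀ * Gᵀ + Rv).PosDef := by
  have h1 := (hRn.posSemidef).mul_mul_conjTranspose_same (G * W)
  have h1' : (G * W * Rn * Wᵀ * Gᵀ).PosSemidef := by
    simpa [Matrix.conjTranspose_eq_transpose_of_trivial, Matrix.transpose_mul,
      Matrix.mul_assoc] using h1
  exact Matrix.PosDef.posSemidef_add h1' hRv

lemma wood' (hRn : Rn.PosDef) (hRv : Rv.PosDef) :
    Rn⁻¹ - Rn⁻¹ * (Wᵀ * Gᵀ * Rv⁻¹ * G * W + Rn⁻¹)⁻¹ * Rn⁻¹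
      = Wᵀ * Gᵀ * (G * W * Rn * Wᵀ * Gᵀ + Rv)⁻¹ * G * W := by
  have e1 : Wᵀ * Gᵀ * Rv⁻¹ * G * W = Wᵀ * Gᵀ * Rv⁻¹ * (G * W) :=
    Matrix.mul_assoc (Wᵀ * Gᵀ * Rv⁻¹) G W
  have e2 : G * W * Rn * Wᵀ * Gᵀ = G * W * Rn * (Wᵀ * Gᵀ) :=
    Matrix.mul_assoc (G * W * Rn) Wᵀ Gᵀ
  have e3 : Wᵀ * Gᵀ * (G * W * Rn * Wᵀ * Gᵀ + Rv)⁻¹ * G * W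
      = Wᵀ * Gᵀ * (G * W * Rn * (Wᵀ * Gᵀ) + Rv)⁻¹ * (G * W) := by
    rw [← e2]; exact Matrix.mul_assoc _ G W
  rw [e1, e3]
  refine wood (Wᵀ * Gᵀ) (G * W) Rn Rv hRn.det_pos.ne'.isUnit hRv.det_pos.ne'.isUnit ?_ ?_
  · have := S_posdef G Rn Rv W hRn hRv
    rw [e1] at this
    exact this.det_pos.ne'.isUnit
  · have := A_posdef G Rn Rv W hRn hRv
    rw [e2] at this
    exact this.det_pos.ne'.isUnit

end perW

/-- Lemma 2 (equality of optimal values): the optimal value of the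
bilinear-matrix-inequality program (10) equals `Tr(Rₙ⁻¹)` minus the optimal value
of the trace-maximization problem (9). -/
theorem bmi_program_optimal_value (M K : ℕ)
    (G : Matrix (Fin M) (Fin M) ℝ)
    (Rn : Matrix (Fin K) (Fin K) ℝ) (hRn : Rn.PosDef)
    (Rv : Matrix (Fin M) (Fin M) ℝ) (hRv : Rv.PosDef)
    (Rθ : Matrix (Fin K) (Fin K) ℝ) (hRθ : Rθ.PosSemidef)
    (P₀ : ℝ) (hP₀ : 0 < P₀)
    (F : Set (Matrix (Fin M) (Fin K) ℝ))
    (hF : F = {W | (W * (Rθ + Rn) * Wᵀ).trace ≤ P₀}) :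
    sInf {γ : ℝ | ∃ W ∈ F, ∃ Γ : Matrix (Fin K) (Fin K) ℝ, Γ.IsSymm ∧
        Γ.trace ≤ γ ∧
        (Matrix.fromBlocks Γ Rn⁻¹ Rn⁻¹ (Wᵀ * Gᵀ * Rv⁻¹ * G * W + Rn⁻¹)).PosSemidef}
      = (Rn⁻¹).trace -
        sSup {t : ℝ | ∃ W ∈ F,
          t = (Wᵀ * Gᵀ * (G * W * Rn * Wᵀ * Gᵀ + Rv)⁻¹ * G * W).trace} := by
  classical
  set a : ℝ := (Rn⁻¹).trace with ha
  set T : Set ℝ := {t : ℝ | ∃ W ∈ F,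
      t = (Wᵀ * Gᵀ * (G * W * Rn * Wᵀ * Gᵀ + Rv)⁻¹ * G * W).trace} with hT
  set Sγ : Set ℝ := {γ : ℝ | ∃ W ∈ F, ∃ Γ : Matrix (Fin K) (Fin K) ℝ, Γ.IsSymm ∧
      Γ.trace ≤ γ ∧
      (Matrix.fromBlocks Γ Rn⁻¹ Rn⁻¹ (Wᵀ * Gᵀ * Rv⁻¹ * G * W + Rn⁻¹)).PosSemidef} with hSγ
  have hRninvH : (Rn⁻¹).IsHermitian := hRn.isHermitian.inv
  -- the per-W "cost" and its relation to t
  have hcost : ∀ W : Matrix (Fin M) (Fin K) ℝ,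
      (Rn⁻¹ * (Wᵀ * Gᵀ * Rv⁻¹ * G * W + Rn⁻¹)⁻¹ * Rn⁻¹).trace
        = a - (Wᵀ * Gᵀ * (G * W * Rn * Wᵀ * Gᵀ + Rv)⁻¹ * G * W).trace := by
    intro W
    have := wood' G Rn Rv W hRn hRv
    have h2 := congrArg Matrix.trace this
    rw [Matrix.trace_sub] at h2
    linarith [h2]
  -- Schur complement characterization
  have hchar : ∀ γ : ℝ, γ ∈ Sγ ↔ ∃ s ∈ T, a - s ≤ γ := by
    intro γ
    constructor
    · rintro ⟨W, hWF, Γ, hΓsym, hΓtr, hblk⟩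
      refine ⟨(Wᵀ * Gᵀ * (G * W * Rn * Wᵀ * Gᵀ + Rv)⁻¹ * G * W).trace, ⟨W, hWF, rfl⟩, ?_⟩
      have hSpd := S_posdef G Rn Rv W hRn hRv
      haveI := hSpd.isUnit.invertible
      have schur := Matrix.PosDef.fromBlocks₂₂ Γ Rn⁻¹ hSpd
      rw [hRninvH.eq] at schur
      have hpsd := schur.mp hblk
      have h0 := psd_trace_nonneg hpsd
      rw [Matrix.trace_sub] at h0
      have := hcost W
      linarith
    · rintro ⟨s, ⟨W, hWF, rfl⟩, hle⟩
      set S := Wᵀ * Gᵀ * Rv⁻¹ * G * W + Rn⁻¹ with hSdef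
      have hSpd := S_posdef G Rn Rv W hRn hRv
      haveI := hSpd.isUnit.invertible
      set Γ₀ := Rn⁻¹ * S⁻¹ * Rn⁻¹ with hΓ₀
      have hΓ₀psd : Γ₀.PosSemidef := by
        have := (hSpd.inv.posSemidef).conjTranspose_mul_mul_same Rn⁻¹
        rwa [hRninvH.eq] at this
      refine ⟨W, hWF, Γ₀, ?_, ?_, ?_⟩
      · rw [Matrix.IsSymm, ← Matrix.conjTranspose_eq_transpose_of_trivial]
        exact hΓ₀psd.isHermitian
      · have := hcost W
        rw [← hSdef] at this
        rw [hΓ₀, this]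
        linarith
      · have schur := Matrix.PosDef.fromBlocks₂₂ Γ₀ Rn⁻¹ hSpd
        rw [hRninvH.eq] at schur
        refine schur.mpr ?_
        rw [hΓ₀, sub_self]
        exact Matrix.PosSemidef.zero
  -- basic facts about T
  have h0F : (0 : Matrix (Fin M) (Fin K) ℝ) ∈ F := by
    rw [hF]; simp [hP₀.le]
  have hT0 : (0 : ℝ) ∈ T := ⟨0, h0F, by simp⟩
  have hTne : T.Nonempty := ⟨0, hT0⟩
  have hTbdd : ∀ s ∈ T, s ≤ a := by
    rintro s ⟨W, hWF, rfl⟩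
    have hSpd := S_posdef G Rn Rv W hRn hRv
    have hΓ₀psd : (Rn⁻¹ * (Wᵀ * Gᵀ * Rv⁻¹ * G * W + Rn⁻¹)⁻¹ * Rn⁻¹).PosSemidef := by
      have := (hSpd.inv.posSemidef).conjTranspose_mul_mul_same Rn⁻¹
      rwa [hRninvH.eq] at this
    have h0 := psd_trace_nonneg hΓ₀psd
    have := hcost W
    linarith
  have hTbddAbove : BddAbove T := ⟨a, fun s hs => hTbdd s hs⟩
  set σ : ℝ := sSup T with hσ
  have hσ0 : (0:ℝ) ≤ σ := le_csSup hTbddAbove hT0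
  have hSγne : Sγ.Nonempty := ⟨a, (hchar a).mpr ⟨0, hT0, by linarith⟩⟩
  have hSγbdd : BddBelow Sγ := by
    refine ⟨a - σ, fun γ hγ => ?_⟩
    obtain ⟨s, hsT, hle⟩ := (hchar γ).mp hγ
    have : s ≤ σ := le_csSup hTbddAbove hsT
    linarith
  refine le_antisymm ?_ ?_
  · -- sInf Sγ ≤ a - σ
    have hkey : ∀ s ∈ T, sInf Sγ ≤ a - s := by
      intro s hsT
      exact csInf_le hSγbdd ((hchar (a - s)).mpr ⟨s, hsT, le_refl _⟩)
    have : σ ≤ a - sInf Sγ := csSup_le hTne fun s hsT => by linarith [hkey s hsT]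
    linarith
  · -- a - σ ≤ sInf Sγ
    refine le_csInf hSγne fun γ hγ => ?_
    obtain ⟨s, hsT, hle⟩ := (hchar γ).mp hγ
    have : s ≤ σ := le_csSup hTbddAbove hsT
    linarith
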